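/- Let H, F : [0,∞) → ℂ be continuous with |H(s)| ≤ C·s^{α−1}·e^{ρs} and |F(s)| ≤ N·e^{νs}/(1+s²), where α > 0, C, N ≥ 0, and ν ≥ ρ + 1. Then for all q ≥ 0: ∫₀^q |H(s)|·|F(q−s)| ds ≤ K·C·Γ(α)·(ν−ρ)^{−α}·N·e^{νq}/(1+q²) for some constant K depending only on α. -/

import Mathlib

open MeasureTheory Real Set

private lemma aux_integrable {α lam : ℝ} (hα : -1 < α) (hl0 : 0 < lam) :
    IntegrableOn (fun s : ℝ => s ^ α * Real.exp (-(lam * s))) (Ioi 0) := by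
  have := integrableOn_rpow_mul_exp_neg_mul_rpow hα zero_lt_one hl0 (p := 1) (s := α)
  simpa [Real.rpow_one, neg_mul] using this

private lemma aux_int (α lam : ℝ) (hα : 0 < α) (hlam : 1 ≤ lam) {q : ℝ} (hq : 0 ≤ q) :
    ∫ s in (0:ℝ)..q, s ^ (α - 1) * ((1 + s ^ 2) * Real.exp (-(lam * s))) ≤
      (1 + α * (α + 1)) * Real.Gamma α * lam ^ (-α) := by
  have hl0 : (0:ℝ) < lam := lt_of_lt_of_le one_pos hlam
  have I1 : IntegrableOn (fun s : ℝ => s ^ (α - 1) * Real.exp (-(lam * s))) (Ioi 0) :=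
    aux_integrable (by linarith) hl0
  have I2 : IntegrableOn (fun s : ℝ => s ^ (α + 1) * Real.exp (-(lam * s))) (Ioi 0) :=
    aux_integrable (by linarith) hl0
  have heq : EqOn (fun s : ℝ => s ^ (α - 1) * Real.exp (-(lam * s)) +
      s ^ (α + 1) * Real.exp (-(lam * s)))
      (fun s : ℝ => s ^ (α - 1) * ((1 + s ^ 2) * Real.exp (-(lam * s)))) (Ioi 0) := by
    intro s hs
    have hs0 : (0:ℝ) < s := hs
    have h2 : s ^ (α + 1) = s ^ (α - 1) * s ^ 2 := by
      rw [show s ^ (2:ℕ) = s ^ (2:ℝ) by rw [← Real.rpow_natCast s 2]; norm_num,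
        ← Real.rpow_add hs0]
      ring_nf
    simp only [h2]
    ring
  have Isum0 : IntegrableOn (fun s : ℝ => s ^ (α - 1) * Real.exp (-(lam * s)) +
      s ^ (α + 1) * Real.exp (-(lam * s))) (Ioi 0) := I1.add I2
  have Isum : IntegrableOn
      (fun s : ℝ => s ^ (α - 1) * ((1 + s ^ 2) * Real.exp (-(lam * s)))) (Ioi 0) :=
    Isum0.congr_fun heq measurableSet_Ioi
  have step1 : ∫ s in (0:ℝ)..q, s ^ (α - 1) * ((1 + s ^ 2) * Real.exp (-(lam * s))) ≤
      ∫ s in Ioi (0:ℝ), s ^ (α - 1) * ((1 + s ^ 2) * Real.exp (-(lam * s))) := by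
    rw [intervalIntegral.integral_of_le hq]
    refine setIntegral_mono_set Isum ?_ (HasSubset.Subset.eventuallyLE Ioc_subset_Ioi_self)
    filter_upwards [ae_restrict_mem measurableSet_Ioi] with s hs
    have hs0 : (0:ℝ) < s := hs
    positivity
  have hG2 : Real.Gamma (α + 2) = (α + 1) * (α * Real.Gamma α) := by
    have h1 : α + 2 = (α + 1) + 1 := by ring
    rw [h1, Real.Gamma_add_one (by positivity), Real.Gamma_add_one (ne_of_gt hα)]
  have hval : ∫ s in Ioi (0:ℝ), s ^ (α - 1) * ((1 + s ^ 2) * Real.exp (-(lam * s))) =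
      (1 / lam) ^ α * Real.Gamma α + (1 / lam) ^ (α + 2) * Real.Gamma (α + 2) := by
    rw [← setIntegral_congr_fun measurableSet_Ioi heq, integral_add I1 I2,
      integral_rpow_mul_exp_neg_mul_Ioi hα hl0]
    congr 1
    have h2 : ∀ s : ℝ, s ^ (α + 1) = s ^ ((α + 2) - 1) := by intro s; rw [show α + 2 - 1 = α + 1 by ring]
    simp_rw [h2]
    exact integral_rpow_mul_exp_neg_mul_Ioi (by linarith) hl0
  have hpow : (1 / lam) ^ α = lam ^ (-α) := by
    rw [one_div, Real.rpow_neg hl0.le, ← Real.inv_rpow hl0.le]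
  have hpow2 : (1 / lam) ^ (α + 2) ≤ lam ^ (-α) := by
    rw [← hpow]
    exact Real.rpow_le_rpow_of_exponent_ge (by positivity) ((div_le_one hl0).mpr hlam)
      (by linarith)
  have hGpos : 0 < Real.Gamma α := Real.Gamma_pos_of_pos hα
  calc ∫ s in (0:ℝ)..q, s ^ (α - 1) * ((1 + s ^ 2) * Real.exp (-(lam * s)))
      ≤ (1 / lam) ^ α * Real.Gamma α + (1 / lam) ^ (α + 2) * Real.Gamma (α + 2) := by
        rw [← hval]; exact step1
    _ ≤ (1 + α * (α + 1)) * Real.Gamma α * lam ^ (-α) := by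
        rw [hpow, hG2]
        nlinarith [hpow2, mul_le_mul_of_nonneg_right hpow2
          (show (0:ℝ) ≤ (α + 1) * (α * Real.Gamma α) by positivity)]

theorem stmt_4 (α : ℝ) (hα : 0 < α) :
    ∃ K : ℝ, 0 < K ∧
      ∀ (C N ρ ν : ℝ), 0 ≤ C → 0 ≤ N → ν ≥ ρ + 1 →
        ∀ (H F : ℝ → ℂ), ContinuousOn H (Set.Ici 0) → ContinuousOn F (Set.Ici 0) →
          (∀ s, 0 ≤ s → ‖H s‖ ≤ C * s ^ (α - 1) * Real.exp (ρ * s)) →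
          (∀ s, 0 ≤ s → ‖F s‖ ≤ N * Real.exp (ν * s) / (1 + s ^ 2)) →
          ∀ q, 0 ≤ q →
            ∫ s in (0:ℝ)..q, ‖H s‖ * ‖F (q - s)‖ ≤
              K * C * Real.Gamma α * (ν - ρ) ^ (-α) * N * Real.exp (ν * q) / (1 + q ^ 2) := by
  refine ⟨2 * (1 + α * (α + 1)), by nlinarith, ?_⟩
  intro C N ρ ν hC hN hν H F hH hF hHb hFb q hq
  set lam := ν - ρ with hlamdef
  have hlam1 : 1 ≤ lam := by simp only [hlamdef]; linarith
  have hl0 : (0:ℝ) < lam := lt_of_lt_of_le one_pos hlam1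
  set c : ℝ := 2 * C * N * Real.exp (ν * q) / (1 + q ^ 2) with hc
  have hc0 : 0 ≤ c := by positivity
  -- pointwise bound
  have key : ∀ s ∈ Icc (0:ℝ) q, ‖H s‖ * ‖F (q - s)‖ ≤
      c * (s ^ (α - 1) * ((1 + s ^ 2) * Real.exp (-(lam * s)))) := by
    intro s hs
    have hs0 : 0 ≤ s := hs.1
    have hqs : 0 ≤ q - s := by linarith [hs.2]
    have h1 := hHb s hs0
    have h2 := hFb (q - s) hqs
    have hexp : Real.exp (ρ * s) * Real.exp (ν * (q - s)) =
        Real.exp (ν * q) * Real.exp (-(lam * s)) := by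
      rw [← Real.exp_add, ← Real.exp_add]
      congr 1
      simp only [hlamdef]; ring
    have frac : (1 + (q - s) ^ 2)⁻¹ ≤ 2 * (1 + s ^ 2) / (1 + q ^ 2) := by
      rw [inv_eq_one_div, div_le_div_iff₀ (by positivity) (by positivity)]
      nlinarith [sq_nonneg (q - 2 * s), sq_nonneg (s * (q - s))]
    have hA : (0:ℝ) ≤ s ^ (α - 1) := Real.rpow_nonneg hs0 _
    calc ‖H s‖ * ‖F (q - s)‖
        ≤ (C * s ^ (α - 1) * Real.exp (ρ * s)) *
            (N * Real.exp (ν * (q - s)) / (1 + (q - s) ^ 2)) := by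
          apply mul_le_mul h1 h2 (norm_nonneg _)
          positivity
      _ = (C * N * s ^ (α - 1) * (Real.exp (ν * q) * Real.exp (-(lam * s)))) *
            (1 + (q - s) ^ 2)⁻¹ := by rw [← hexp]; ring
      _ ≤ (C * N * s ^ (α - 1) * (Real.exp (ν * q) * Real.exp (-(lam * s)))) *
            (2 * (1 + s ^ 2) / (1 + q ^ 2)) := by
          apply mul_le_mul_of_nonneg_left frac
          positivity
      _ = c * (s ^ (α - 1) * ((1 + s ^ 2) * Real.exp (-(lam * s)))) := by
          rw [hc]; ring
  -- integrability of LHS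
  have mapsTo1 : MapsTo (fun s : ℝ => s) (uIcc 0 q) (Ici 0) := by
    intro s hs
    rw [uIcc_of_le hq] at hs
    exact hs.1
  have mapsTo2 : MapsTo (fun s : ℝ => q - s) (uIcc 0 q) (Ici 0) := by
    intro s hs
    rw [uIcc_of_le hq] at hs
    simp only [mem_Ici]
    linarith [hs.2]
  have intLHS : IntervalIntegrable (fun s => ‖H s‖ * ‖F (q - s)‖) volume 0 q := by
    apply ContinuousOn.intervalIntegrable
    exact ((hH.comp continuousOn_id mapsTo1).norm).mul
      ((hF.comp (continuous_const.sub continuous_id).continuousOn mapsTo2).norm)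
  have intRHS : IntervalIntegrable
      (fun s => c * (s ^ (α - 1) * ((1 + s ^ 2) * Real.exp (-(lam * s))))) volume 0 q := by
    apply IntervalIntegrable.const_mul
    exact (intervalIntegral.intervalIntegrable_rpow' (by linarith : (-1:ℝ) < α - 1)).mul_continuousOn
      (by fun_prop)
  have step1 : ∫ s in (0:ℝ)..q, ‖H s‖ * ‖F (q - s)‖ ≤
      ∫ s in (0:ℝ)..q, c * (s ^ (α - 1) * ((1 + s ^ 2) * Real.exp (-(lam * s)))) :=
    intervalIntegral.integral_mono_on hq intLHS intRHS key
  have step2 : ∫ s in (0:ℝ)..q, c * (s ^ (α - 1) * ((1 + s ^ 2) * Real.exp (-(lam * s)))) =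
      c * ∫ s in (0:ℝ)..q, s ^ (α - 1) * ((1 + s ^ 2) * Real.exp (-(lam * s))) :=
    intervalIntegral.integral_const_mul _ _
  have step3 := aux_int α lam hα hlam1 hq
  calc ∫ s in (0:ℝ)..q, ‖H s‖ * ‖F (q - s)‖
      ≤ c * ∫ s in (0:ℝ)..q, s ^ (α - 1) * ((1 + s ^ 2) * Real.exp (-(lam * s))) := by
        rw [← step2]; exact step1
    _ ≤ c * ((1 + α * (α + 1)) * Real.Gamma α * lam ^ (-α)) :=
        mul_le_mul_of_nonneg_left step3 hc0
    _ = 2 * (1 + α * (α + 1)) * C * Real.Gamma α * lam ^ (-α) * N *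
          Real.exp (ν * q) / (1 + q ^ 2) := by rw [hc]; ring
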